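/- Let E be a topological graph and, for n, m ∈ ℕ, let U ⊆ Eⁿ and V ⊆ E^m (spaces of paths of length n and m). Then Z(U) ∩ Z(V) equals Z((U × r⁻¹_{m−n}(dₙ(U))) ∩ V) if n < m, Z(U ∩ (V × r⁻¹_{n−m}(d_m(V)))) if m < n, and Z(U ∩ V) if n = m. In particular, since each dₙ is open and each rₙ is continuous, the collection of sets Z(U) ∩ Z(K)ᶜ with U open and K a compact subset of the finite-path space (disjoint union topology) is closed under finite intersections. -/

import Mathlib

open Set Topology

variable {E0 E1 : Type*} [TopologicalSpace E0] [TopologicalSpace E1]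

/-- `E⁰_fin`: vertices with a neighbourhood whose `r`-preimage is compact. -/
def E0fin (r : E1 → E0) : Set E0 := {v | ∃ V ∈ nhds v, IsCompact (r ⁻¹' V)}

/-- `E⁰_sce = E⁰ \ closure (r(E¹))`. -/
def E0sce (r : E1 → E0) : Set E0 := (closure (Set.range r))ᶜ

/-- `E⁰_rg = E⁰_fin \ closure (E⁰_sce)`, the regular vertices. -/
def E0rg (r : E1 → E0) : Set E0 := E0fin r \ closure (E0sce r)

/-- `E⁰_inf = E⁰ \ E⁰_fin`. -/
def E0inf (r : E1 → E0) : Set E0 := (E0fin r)ᶜ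

/-- `E⁰_sg = E⁰_inf ∪ closure (E⁰_sce)`, the singular vertices. -/
def E0sg (r : E1 → E0) : Set E0 := E0inf r ∪ closure (E0sce r)

/-- The chain condition for a tuple of `n` edges: `d μᵢ = r μ_{i+1}`. -/
def ChainN (d r : E1 → E0) (n : ℕ) (f : Fin n → E1) : Prop :=
  ∀ (i : ℕ) (h : i + 1 < n), d (f ⟨i, Nat.lt_of_succ_lt h⟩) = r (f ⟨i + 1, h⟩)

/-- The space `Eⁿ` of paths of length `n`, realized as a subset of
`E⁰ × (E¹)ⁿ` (the first coordinate being the range vertex). -/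
def PathN (d r : E1 → E0) (n : ℕ) : Set (E0 × (Fin n → E1)) :=
  {p | ChainN d r n p.2 ∧ ∀ h : 0 < n, p.1 = r (p.2 ⟨0, h⟩)}

/-- The space of all finite and infinite paths of a topological graph. -/
def TPath (d r : E1 → E0) : Type _ :=
  (Σ n : ℕ, {p : E0 × (Fin n → E1) // p ∈ PathN d r n}) ⊕
    {q : E0 × (ℕ → E1) // (∀ i : ℕ, d (q.2 i) = r (q.2 (i + 1))) ∧ q.1 = r (q.2 0)}

/-- Truncation of a length-`n` tuple to length `k ≤ n`. -/
def truncT (k n : ℕ) (h : k ≤ n) (p : E0 × (Fin n → E1)) : E0 × (Fin k → E1) :=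
  (p.1, fun i => p.2 ⟨i.1, lt_of_lt_of_le i.2 h⟩)

/-- The cylinder set `Z(A)` of all paths whose length-`n` prefix lies in `A`. -/
def ZT (d r : E1 → E0) (n : ℕ) (A : Set (E0 × (Fin n → E1))) : Set (TPath d r) :=
  Sum.elim (fun q => ∃ h : n ≤ q.1, truncT n q.1 h q.2.1 ∈ A)
    (fun q => ((q.1.1, fun i : Fin n => q.1.2 i.1) : E0 × (Fin n → E1)) ∈ A)

/-- The domain map `dₙ` on length-`n` tuples. -/
def dmapN (d : E1 → E0) (n : ℕ) (p : E0 × (Fin n → E1)) : E0 :=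
  if h : 0 < n then d (p.2 ⟨n - 1, Nat.sub_lt h Nat.one_pos⟩) else p.1

/-- The length of a finite or infinite path. -/
def lenT (d r : E1 → E0) (p : TPath d r) : ℕ∞ :=
  Sum.elim (fun q => (q.1 : ℕ∞)) (fun _ => (⊤ : ℕ∞)) p


section Aux

theorem ZT_inter' (d r : E1 → E0) (k1 k2 : ℕ) (h : k1 ≤ k2)
    (A : Set (E0 × (Fin k1 → E1))) (B : Set (E0 × (Fin k2 → E1))) :
    ZT d r k1 A ∩ ZT d r k2 B = ZT d r k2 (truncT k1 k2 h ⁻¹' A ∩ B) := by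
  ext p
  cases p with
  | inl q =>
    simp only [ZT, mem_inter_iff, (fun (x : TPath d r) (s : Set (TPath d r)) => (Iff.rfl : x ∈ s ↔ s x)), Sum.elim_inl, mem_preimage]
    constructor
    · rintro ⟨⟨h1, hA⟩, ⟨h2, hB⟩⟩
      refine ⟨h2, ?_, hB⟩
      exact hA
    · rintro ⟨h2, hA, hB⟩
      exact ⟨⟨h.trans h2, hA⟩, ⟨h2, hB⟩⟩
  | inr q =>
    simp only [ZT, mem_inter_iff, (fun (x : TPath d r) (s : Set (TPath d r)) => (Iff.rfl : x ∈ s ↔ s x)), Sum.elim_inr, mem_preimage]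
    constructor
    · rintro ⟨hA, hB⟩; exact ⟨hA, hB⟩
    · rintro ⟨hA, hB⟩; exact ⟨hA, hB⟩

theorem truncT_continuous' (k n : ℕ) (h : k ≤ n) :
    Continuous (truncT (E0 := E0) (E1 := E1) k n h) := by
  unfold truncT
  fun_prop

theorem truncT_self' (n : ℕ) (p : E0 × (Fin n → E1)) : truncT n n le_rfl p = p := by
  unfold truncT
  ext <;> simp

theorem key_set' (d r : E1 → E0) (n m : ℕ) (h : n < m)
    (U : Set (E0 × (Fin n → E1))) (V : Set (E0 × (Fin m → E1)))
    (hU : U ⊆ PathN d r n) (hV : V ⊆ PathN d r m) :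
    truncT n m h.le ⁻¹' U ∩ V =
      {p | truncT n m h.le p ∈ U ∧ r (p.2 ⟨n, h⟩) ∈ dmapN d n '' U} ∩ V := by
  ext p
  simp only [mem_inter_iff, mem_preimage, mem_setOf_eq, and_congr_left_iff]
  intro hpV
  constructor
  · intro hpU
    refine ⟨hpU, truncT n m h.le p, hpU, ?_⟩
    obtain ⟨hchain, hrange⟩ := hV hpV
    rcases Nat.eq_zero_or_pos n with hn | hn
    · subst hn
      simp only [dmapN, truncT, dif_neg (lt_irrefl 0)]
      exact hrange (by omega)
    · simp only [dmapN, dif_pos hn, truncT]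
      have heq := hchain (n - 1) (by omega)
      have h1 : (⟨n - 1 + 1, by omega⟩ : Fin m) = ⟨n, h⟩ := by ext; simp; omega
      rw [h1] at heq
      exact heq
  · exact fun hp => hp.1

theorem union_compacts' (d r : E1 → E0) (N1 N2 : ℕ) (l1 : Fin N1 → ℕ) (l2 : Fin N2 → ℕ)
    (K1 : (i : Fin N1) → Set (E0 × (Fin (l1 i) → E1)))
    (K2 : (i : Fin N2) → Set (E0 × (Fin (l2 i) → E1)))
    (hK1 : ∀ i, IsCompact (K1 i) ∧ K1 i ⊆ PathN d r (l1 i))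
    (hK2 : ∀ i, IsCompact (K2 i) ∧ K2 i ⊆ PathN d r (l2 i)) :
    ∃ (N : ℕ) (l : Fin N → ℕ) (K : (i : Fin N) → Set (E0 × (Fin (l i) → E1))),
      (∀ i, IsCompact (K i) ∧ K i ⊆ PathN d r (l i)) ∧
      (⋃ i, ZT d r (l i) (K i)) =
        (⋃ i, ZT d r (l1 i) (K1 i)) ∪ (⋃ i, ZT d r (l2 i) (K2 i)) := by
  set e := finSumFinEquiv (m := N1) (n := N2)
  set l' : Fin N1 ⊕ Fin N2 → ℕ := Sum.elim l1 l2 with hl'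
  set K' : (s : Fin N1 ⊕ Fin N2) → Set (E0 × (Fin (l' s) → E1)) := fun s =>
    match s with
    | .inl a => K1 a
    | .inr b => K2 b with hK'
  refine ⟨N1 + N2, fun i => l' (e.symm i), fun i => K' (e.symm i), ?_, ?_⟩
  · intro i
    rcases h : e.symm i with a | b <;> dsimp only <;>
      show IsCompact (K' (e.symm i)) ∧ K' (e.symm i) ⊆ PathN d r (l' (e.symm i)) <;> rw [h]
    · exact hK1 a
    · exact hK2 b
  · have h1 : (⋃ i, ZT d r (l' (e.symm i)) (K' (e.symm i))) = ⋃ s, ZT d r (l' s) (K' s) :=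
      Equiv.iSup_comp (g := fun s => ZT d r (l' s) (K' s)) e.symm
    rw [h1, iUnion_sum]
    rfl

/-- helper for part 4 in the ordered case. -/
theorem part4_le' (d r : E1 → E0) {k1 k2 : ℕ} (h : k1 ≤ k2)
    (U1 : Set (E0 × (Fin k1 → E1))) (U2 : Set (E0 × (Fin k2 → E1)))
    (hU1 : IsOpen U1) (hU2 : IsOpen U2)
    (N1 N2 : ℕ) (l1 : Fin N1 → ℕ) (l2 : Fin N2 → ℕ)
    (K1 : (i : Fin N1) → Set (E0 × (Fin (l1 i) → E1)))
    (K2 : (i : Fin N2) → Set (E0 × (Fin (l2 i) → E1)))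
    (hK1 : ∀ i, IsCompact (K1 i) ∧ K1 i ⊆ PathN d r (l1 i))
    (hK2 : ∀ i, IsCompact (K2 i) ∧ K2 i ⊆ PathN d r (l2 i)) :
    (ZT d r k1 U1 ∩ (⋃ i, ZT d r (l1 i) (K1 i))ᶜ) ∩
      (ZT d r k2 U2 ∩ (⋃ i, ZT d r (l2 i) (K2 i))ᶜ) ∈
    {S : Set (TPath d r) | ∃ (k : ℕ) (U' : Set (E0 × (Fin k → E1))), IsOpen U' ∧
        ∃ (N : ℕ) (l : Fin N → ℕ) (K : (i : Fin N) → Set (E0 × (Fin (l i) → E1))),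
          (∀ i, IsCompact (K i) ∧ K i ⊆ PathN d r (l i)) ∧
          S = ZT d r k U' ∩ (⋃ i, ZT d r (l i) (K i))ᶜ} := by
  obtain ⟨N, l, K, hK, hKU⟩ := union_compacts' d r N1 N2 l1 l2 K1 K2 hK1 hK2
  refine ⟨k2, truncT k1 k2 h ⁻¹' U1 ∩ U2,
    (hU1.preimage (truncT_continuous' k1 k2 h)).inter hU2, N, l, K, hK, ?_⟩
  rw [hKU, Set.inter_inter_inter_comm, ← Set.compl_union, ZT_inter' d r k1 k2 h U1 U2]

end Aux

/-- the intersection formulas for cylinder sets over a topological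
graph, and closure under finite intersections of the collection of basic sets
`Z(U) ∩ Z(K)ᶜ` with `U` open and `K` a compact subset of the finite-path space
(a finite union of compacts `K i ⊆ E^(l i)`). -/
theorem stmt_17 (d r : E1 → E0) (hr : Continuous r) (hd : IsLocalHomeomorph d)
    (n m : ℕ) (U : Set (E0 × (Fin n → E1))) (V : Set (E0 × (Fin m → E1)))
    (hU : U ⊆ PathN d r n) (hV : V ⊆ PathN d r m) :
    (∀ h : n < m,
      ZT d r n U ∩ ZT d r m V =
        ZT d r m ({p | truncT n m h.le p ∈ U ∧ r (p.2 ⟨n, h⟩) ∈ dmapN d n '' U} ∩ V)) ∧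
    (∀ h : m < n,
      ZT d r n U ∩ ZT d r m V =
        ZT d r n (U ∩ {p | truncT m n h.le p ∈ V ∧ r (p.2 ⟨m, h⟩) ∈ dmapN d m '' V})) ∧
    (∀ W : Set (E0 × (Fin n → E1)), ZT d r n U ∩ ZT d r n W = ZT d r n (U ∩ W)) ∧
    (∀ S ∈ {S : Set (TPath d r) | ∃ (k : ℕ) (U' : Set (E0 × (Fin k → E1))), IsOpen U' ∧
          ∃ (N : ℕ) (l : Fin N → ℕ) (K : (i : Fin N) → Set (E0 × (Fin (l i) → E1))),
            (∀ i, IsCompact (K i) ∧ K i ⊆ PathN d r (l i)) ∧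
            S = ZT d r k U' ∩ (⋃ i, ZT d r (l i) (K i))ᶜ},
      ∀ T ∈ {S : Set (TPath d r) | ∃ (k : ℕ) (U' : Set (E0 × (Fin k → E1))), IsOpen U' ∧
          ∃ (N : ℕ) (l : Fin N → ℕ) (K : (i : Fin N) → Set (E0 × (Fin (l i) → E1))),
            (∀ i, IsCompact (K i) ∧ K i ⊆ PathN d r (l i)) ∧
            S = ZT d r k U' ∩ (⋃ i, ZT d r (l i) (K i))ᶜ},
      S ∩ T ∈ {S : Set (TPath d r) | ∃ (k : ℕ) (U' : Set (E0 × (Fin k → E1))), IsOpen U' ∧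
          ∃ (N : ℕ) (l : Fin N → ℕ) (K : (i : Fin N) → Set (E0 × (Fin (l i) → E1))),
            (∀ i, IsCompact (K i) ∧ K i ⊆ PathN d r (l i)) ∧
            S = ZT d r k U' ∩ (⋃ i, ZT d r (l i) (K i))ᶜ}) := by
  refine ⟨?_, ?_, ?_, ?_⟩
  · intro h
    rw [ZT_inter' d r n m h.le U V, key_set' d r n m h U V hU hV]
  · intro h
    rw [inter_comm, ZT_inter' d r m n h.le V U, key_set' d r m n h V U hV hU,
      Set.inter_comm]
  · intro W
    have hP : truncT (E0 := E0) (E1 := E1) n n le_rfl ⁻¹' U = U := by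
      ext p; rw [mem_preimage, truncT_self']
    rw [ZT_inter' d r n n le_rfl U W, hP]
  · rintro S ⟨k1, U1, hU1, N1, l1, K1, hK1, rfl⟩ T ⟨k2, U2, hU2, N2, l2, K2, hK2, rfl⟩
    rcases le_total k1 k2 with h | h
    · exact part4_le' d r h U1 U2 hU1 hU2 N1 N2 l1 l2 K1 K2 hK1 hK2
    · rw [Set.inter_comm]
      exact part4_le' d r h U2 U1 hU2 hU1 N2 N1 l2 l1 K2 K1 hK2 hK1
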